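/- Let β be a mixed base and m ≥ 1. For S ⊆ {0,...,m-1} and 𝒞 ⊆ ℕ^m, define 𝒞|_S as the set of restrictions to coordinates in S of elements of 𝒞 that vanish outside S. If 𝒞 is a Sprague-Grundy system of σ_{β,m}, then for every S ⊆ {0,...,m-1}, 𝒞|_S satisfies adequate covering for σ_{β,|S|}: for every X' ∈ ℕ^{|S|} and every h < σ_β(X'), there exists C' ∈ 𝒞|_S with X' - C' ∈ ℕ^{|S|} and σ_β(X' - C') = h. -/
import Mathlib


open scoped BigOperators

/-- β̂_L = β_0 ⋯ β_{L-1}, the place value of digit L in mixed base β. -/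
def bhat (β : ℕ → ℕ) (L : ℕ) : ℕ := ∏ i ∈ Finset.range L, β i

/-- The L-th digit of n in the mixed base β. -/
def mdigit (β : ℕ → ℕ) (n L : ℕ) : ℕ := n / bhat β L % β L

/-- Digit-wise addition modulo β_L in mixed base β. -/
def moplus (β : ℕ → ℕ) (n h : ℕ) : ℕ :=
  ∑ L ∈ Finset.range (n + h + 1), ((mdigit β n L + mdigit β h L) % β L) * bhat β L

/-- Digit-wise subtraction modulo β_L in mixed base β. -/
def mominus (β : ℕ → ℕ) (n h : ℕ) : ℕ :=
  ∑ L ∈ Finset.range (n + h + 1), ((β L + mdigit β n L - mdigit β h L) % β L) * bhat β L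

/-- σ_β(X) = x^0 ⊕ ⋯ ⊕ x^{m-1}: the digit-wise Nim sum in mixed base β. -/
def msigma (β : ℕ → ℕ) {m : ℕ} (X : Fin m → ℕ) : ℕ :=
  ∑ L ∈ Finset.range (∑ i, X i + 1), ((∑ i, mdigit β (X i) L) % β L) * bhat β L

/-- Hamming weight: number of nonzero components. -/
def hamwt {m : ℕ} (C : Fin m → ℕ) : ℕ := (Finset.univ.filter (fun i => C i ≠ 0)).card

/-- ord_β(n): the largest L with β̂_L ∣ n (⊤ for n = 0). -/
def mord (β : ℕ → ℕ) (n : ℕ) : ℕ∞ :=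
  if n = 0 then ⊤ else (Nat.findGreatest (fun L => bhat β L ∣ n) n : ℕ∞)

/-- 𝒞 is a Sprague-Grundy system of σ_β: its members are nonzero moves and
σ_β satisfies the mex recursion of the take-away game Γ(ℕ^m, 𝒞), i.e. σ_β is the
Sprague-Grundy function of that game. -/
def IsSGSystem (β : ℕ → ℕ) {m : ℕ} (𝒞 : Set (Fin m → ℕ)) : Prop :=
  (∀ C ∈ 𝒞, C ≠ 0) ∧
  ∀ X : Fin m → ℕ, msigma β X =
    sInf {n : ℕ | ∀ C ∈ 𝒞, (∀ i, C i ≤ X i) → msigma β (fun i => X i - C i) ≠ n}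


lemma sum_ext_zero {k m : ℕ} (e : Fin k → Fin m) (he : Function.Injective e)
    (f : Fin m → ℕ) (hf : ∀ i, (∀ j, e j ≠ i) → f i = 0) :
    ∑ i, f i = ∑ j, f (e j) := by
  rw [← Finset.sum_image (g := e) (f := f) (fun a _ b _ hab => he hab)]
  refine (Finset.sum_subset (Finset.subset_univ _) ?_).symm
  intro i _ hi
  refine hf i fun j hj => hi ?_
  simp only [Finset.mem_image, Finset.mem_univ]
  exact ⟨j, trivial, hj⟩

lemma msigma_ext_zero (β : ℕ → ℕ) {k m : ℕ} (e : Fin k → Fin m)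
    (he : Function.Injective e) (f : Fin m → ℕ)
    (hf : ∀ i, (∀ j, e j ≠ i) → f i = 0) :
    msigma β f = msigma β (f ∘ e) := by
  have hd : ∀ L, (∑ i, mdigit β (f i) L) = ∑ j, mdigit β (f (e j)) L := by
    intro L
    exact sum_ext_zero e he (fun i => mdigit β (f i) L)
      (fun i hi => by simp [mdigit, hf i hi])
  unfold msigma
  rw [sum_ext_zero e he f hf]
  exact Finset.sum_congr rfl fun L _ => by rw [hd L]; rfl

/-- Restrictions of a Sprague-Grundy system adequately cover. Here the subset
S ⊆ {0,…,m-1} of coordinates, with |S| = k, is given by a strictly monotone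
map e : Fin k → Fin m. -/
theorem stmt17 (β : ℕ → ℕ) (hβ : ∀ L, 2 ≤ β L) {m : ℕ}
    (𝒞 : Set (Fin m → ℕ)) (h𝒞 : IsSGSystem β 𝒞)
    (k : ℕ) (e : Fin k → Fin m) (he : StrictMono e) :
    ∀ X' : Fin k → ℕ, ∀ h < msigma β X',
      ∃ C' : Fin k → ℕ,
        (∃ C ∈ 𝒞, (∀ j, C (e j) = C' j) ∧ ∀ i, (∀ j, e j ≠ i) → C i = 0) ∧
        (∀ j, C' j ≤ X' j) ∧ msigma β (fun j => X' j - C' j) = h := by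
  intro X' h hh
  obtain ⟨hC0, hSG⟩ := h𝒞
  set X : Fin m → ℕ := Function.extend e X' 0 with hXdef
  have hX1 : ∀ j, X (e j) = X' j := fun j => he.injective.extend_apply X' 0 j
  have hX0 : ∀ i, (∀ j, e j ≠ i) → X i = 0 := by
    intro i hi
    rw [hXdef, Function.extend_apply' _ _ _ (fun ⟨j, hj⟩ => hi j hj)]
    rfl
  have hXe : msigma β X = msigma β X' := by
    rw [msigma_ext_zero β e he.injective X hX0]
    congr 1
    funext j
    exact hX1 j
  have hh' : h < msigma β X := hXe ▸ hh
  have hmem : ¬ (∀ C ∈ 𝒞, (∀ i, C i ≤ X i) → msigma β (fun i => X i - C i) ≠ h) := by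
    intro hmemS
    have h1 := Nat.sInf_le (s := {n : ℕ | ∀ C ∈ 𝒞, (∀ i, C i ≤ X i) →
      msigma β (fun i => X i - C i) ≠ n}) hmemS
    rw [← hSG X] at h1
    omega
  push_neg at hmem
  obtain ⟨C, hC, hle, heq⟩ := hmem
  have hCz : ∀ i, (∀ j, e j ≠ i) → C i = 0 := by
    intro i hi
    have := hle i
    rw [hX0 i hi] at this
    omega
  refine ⟨fun j => C (e j), ⟨C, hC, fun j => rfl, hCz⟩,
    fun j => by rw [← hX1 j]; exact hle (e j), ?_⟩
  have h2 : msigma β (fun i => X i - C i) =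
      msigma β ((fun i => X i - C i) ∘ e) :=
    msigma_ext_zero β e he.injective _ (fun i hi => by rw [hX0 i hi, hCz i hi])
  rw [h2] at heq
  rw [← heq]
  congr 1
  funext j
  simp only [Function.comp_apply, hX1 j]
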